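/- Fix N ∈ ℕ and let u : ℝ → (ℕ → ℂ) with u(t,k) = 0 for all k > N, each t ↦ u(t,k) differentiable, satisfying the Galerkin system: for 0 ≤ k ≤ N, i·(d/dt)u(t,k) = ∑ u(t,n)·conj(u(t,j))·u(t,m), summed over (n,j,m) with 0 ≤ n,j,m ≤ N and n + m = j + k. Then the quantity ∑_{k=0}^{N} k·|u(t,k)|² is constant in t ∈ ℝ; consequently the H^{1/2} norm of the Galerkin solution is conserved. -/

import Mathlib

open scoped BigOperators

/-- The cubic nonlinearity of the Galerkin-truncated Szegő equation on the Fourier side: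
for frequency `k`, the sum of `u(t,n) * conj (u(t,j)) * u(t,m)` over all triples
`(n,j,m)` with `0 ≤ n,j,m ≤ N` and `n + m = j + k`. -/
noncomputable def galerkinCubic (N : ℕ) (u : ℝ → ℕ → ℂ) (t : ℝ) (k : ℕ) : ℂ :=
  ∑ p ∈ (Finset.range (N + 1) ×ˢ Finset.range (N + 1) ×ˢ Finset.range (N + 1)).filter
      (fun p => p.1 + p.2.2 = p.2.1 + k),
    u t p.1 * (starRingEnd ℂ) (u t p.2.1) * u t p.2.2

/-- `u : ℝ → (ℕ → ℂ)` is a solution of the `N`-th Galerkin approximation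
`i ∂ₜ u_N = P_N(|u_N|² u_N)` of the cubic Szegő equation: the Fourier coefficients
vanish for `k > N`, and for `0 ≤ k ≤ N` the map `t ↦ u(t,k)` is differentiable with
`i u'(t,k) = ∑_{0 ≤ n,j,m ≤ N, n+m=j+k} u(t,n) conj(u(t,j)) u(t,m)`. -/
def IsGalerkinSolution (N : ℕ) (u : ℝ → ℕ → ℂ) : Prop :=
  (∀ t : ℝ, ∀ k : ℕ, N < k → u t k = 0) ∧
  ∀ t : ℝ, ∀ k : ℕ, k ≤ N →
    HasDerivAt (fun s : ℝ => u s k) (-Complex.I * galerkinCubic N u t k) t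

namespace GalerkinAux

/-- Quadruples `(k, n, j, m)` with all entries `≤ N` and `n + m = j + k`. -/
def Q (N : ℕ) : Finset (ℕ × ℕ × ℕ × ℕ) :=
  ((Finset.range (N + 1)) ×ˢ Finset.range (N + 1) ×ˢ Finset.range (N + 1) ×ˢ
      Finset.range (N + 1)).filter
    (fun p => p.2.1 + p.2.2.2 = p.2.2.1 + p.1)

/-- The weighted quadrilinear sum. -/
noncomputable def A (N : ℕ) (u : ℝ → ℕ → ℂ) (t : ℝ) (w : ℕ × ℕ × ℕ × ℕ → ℕ) : ℂ :=
  ∑ p ∈ Q N, (w p : ℂ) *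
    (u t p.2.1 * (starRingEnd ℂ) (u t p.2.2.1) * u t p.2.2.2 * (starRingEnd ℂ) (u t p.1))

lemma S_eq_A (N : ℕ) (u : ℝ → ℕ → ℂ) (t : ℝ) :
    ∑ k ∈ Finset.range (N + 1), (k : ℂ) * (starRingEnd ℂ) (u t k) * galerkinCubic N u t k
      = A N u t (fun p => p.1) := by
  unfold A Q galerkinCubic
  rw [Finset.sum_filter, Finset.sum_product]
  refine Finset.sum_congr rfl fun k hk => ?_
  rw [Finset.sum_filter, Finset.mul_sum]
  refine Finset.sum_congr rfl fun p hp => ?_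
  by_cases h : p.1 + p.2.2 = p.2.1 + k
  · simp only [h, if_true]; ring
  · simp [h]

lemma conj_A (N : ℕ) (u : ℝ → ℕ → ℂ) (t : ℝ) :
    (starRingEnd ℂ) (A N u t (fun p => p.1)) = A N u t (fun p => p.2.2.2) := by
  unfold A
  rw [map_sum]
  refine Finset.sum_nbij' (fun p => (p.2.2.2, p.2.2.1, p.2.1, p.1))
    (fun p => (p.2.2.2, p.2.2.1, p.2.1, p.1)) ?_ ?_ ?_ ?_ ?_
  · rintro ⟨k, n, j, m⟩ hp
    simp only [Q, Finset.mem_filter, Finset.mem_product, Finset.mem_range] at hp ⊢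
    omega
  · rintro ⟨k, n, j, m⟩ hp
    simp only [Q, Finset.mem_filter, Finset.mem_product, Finset.mem_range] at hp ⊢
    omega
  · rintro ⟨k, n, j, m⟩ _; rfl
  · rintro ⟨k, n, j, m⟩ _; rfl
  · rintro ⟨k, n, j, m⟩ _
    simp only [map_mul, Complex.conj_conj, map_natCast]
    ring

lemma A_k_eq_A_j (N : ℕ) (u : ℝ → ℕ → ℂ) (t : ℝ) :
    A N u t (fun p => p.1) = A N u t (fun p => p.2.2.1) := by
  unfold A
  refine Finset.sum_nbij' (fun p => (p.2.2.1, p.2.1, p.1, p.2.2.2))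
    (fun p => (p.2.2.1, p.2.1, p.1, p.2.2.2)) ?_ ?_ ?_ ?_ ?_
  · rintro ⟨k, n, j, m⟩ hp
    simp only [Q, Finset.mem_filter, Finset.mem_product, Finset.mem_range] at hp ⊢
    omega
  · rintro ⟨k, n, j, m⟩ hp
    simp only [Q, Finset.mem_filter, Finset.mem_product, Finset.mem_range] at hp ⊢
    omega
  · rintro ⟨k, n, j, m⟩ _; rfl
  · rintro ⟨k, n, j, m⟩ _; rfl
  · rintro ⟨k, n, j, m⟩ _
    simp only
    ring

lemma A_m_eq_A_n (N : ℕ) (u : ℝ → ℕ → ℂ) (t : ℝ) :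
    A N u t (fun p => p.2.2.2) = A N u t (fun p => p.2.1) := by
  unfold A
  refine Finset.sum_nbij' (fun p => (p.1, p.2.2.2, p.2.2.1, p.2.1))
    (fun p => (p.1, p.2.2.2, p.2.2.1, p.2.1)) ?_ ?_ ?_ ?_ ?_
  · rintro ⟨k, n, j, m⟩ hp
    simp only [Q, Finset.mem_filter, Finset.mem_product, Finset.mem_range] at hp ⊢
    omega
  · rintro ⟨k, n, j, m⟩ hp
    simp only [Q, Finset.mem_filter, Finset.mem_product, Finset.mem_range] at hp ⊢
    omega
  · rintro ⟨k, n, j, m⟩ _; rfl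
  · rintro ⟨k, n, j, m⟩ _; rfl
  · rintro ⟨k, n, j, m⟩ _
    simp only
    ring

lemma A_sum_eq (N : ℕ) (u : ℝ → ℕ → ℂ) (t : ℝ) :
    A N u t (fun p => p.2.1) + A N u t (fun p => p.2.2.2)
      = A N u t (fun p => p.2.2.1) + A N u t (fun p => p.1) := by
  unfold A
  rw [← Finset.sum_add_distrib, ← Finset.sum_add_distrib]
  refine Finset.sum_congr rfl fun p hp => ?_
  have hc : p.2.1 + p.2.2.2 = p.2.2.1 + p.1 := by
    simpa [Q, Finset.mem_filter] using (Finset.mem_filter.mp hp).2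
  have : ((p.2.1 : ℂ) + p.2.2.2) = ((p.2.2.1 : ℂ) + p.1) := by
    exact_mod_cast congrArg (Nat.cast : ℕ → ℂ) hc
  rw [← add_mul, ← add_mul, this]

lemma conj_S (N : ℕ) (u : ℝ → ℕ → ℂ) (t : ℝ) :
    (starRingEnd ℂ)
      (∑ k ∈ Finset.range (N + 1), (k : ℂ) * (starRingEnd ℂ) (u t k) * galerkinCubic N u t k)
      = ∑ k ∈ Finset.range (N + 1), (k : ℂ) * (starRingEnd ℂ) (u t k) * galerkinCubic N u t k := by
  rw [S_eq_A, conj_A]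
  have h1 := A_sum_eq N u t
  have h2 := A_m_eq_A_n N u t
  have h3 := A_k_eq_A_j N u t
  -- 2 * A(m) = 2 * A(k)
  have : 2 * A N u t (fun p => p.2.2.2) = 2 * A N u t (fun p => p.1) := by
    rw [two_mul, two_mul]
    calc A N u t (fun p => p.2.2.2) + A N u t (fun p => p.2.2.2)
        = A N u t (fun p => p.2.1) + A N u t (fun p => p.2.2.2) := by rw [h2]
      _ = A N u t (fun p => p.2.2.1) + A N u t (fun p => p.1) := h1
      _ = A N u t (fun p => p.1) + A N u t (fun p => p.1) := by rw [h3]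
  have h4 : A N u t (fun p => p.2.2.2) = A N u t (fun p => p.1) := by
    field_simp at this
    linear_combination this
  exact h4

end GalerkinAux

/-- The quantity `∑_{k=0}^{N} k |u(t,k)|²` (the homogeneous `H^{1/2}`
norm squared of the Galerkin solution) is conserved in time. -/
theorem galerkin_H_half_conservation (N : ℕ) (u : ℝ → ℕ → ℂ)
    (hu : IsGalerkinSolution N u) :
    ∀ t : ℝ, ∑ k ∈ Finset.range (N + 1), (k : ℝ) * ‖u t k‖ ^ 2
      = ∑ k ∈ Finset.range (N + 1), (k : ℝ) * ‖u 0 k‖ ^ 2 := by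
  set F : ℝ → ℝ := fun t => ∑ k ∈ Finset.range (N + 1), (k : ℝ) * ‖u t k‖ ^ 2 with hF
  have key : ∀ t : ℝ, HasDerivAt F 0 t := by
    intro t
    -- derivative of each term
    have hterm : ∀ k ∈ Finset.range (N + 1),
        HasDerivAt (fun s : ℝ => (k : ℝ) * ‖u s k‖ ^ 2)
          (((k : ℂ) * ((starRingEnd ℂ) (-Complex.I * galerkinCubic N u t k) * u t k
            + (starRingEnd ℂ) (u t k) * (-Complex.I * galerkinCubic N u t k))).re) t := by
      intro k hk
      have hkN : k ≤ N := Nat.lt_succ_iff.mp (Finset.mem_range.mp hk)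
      have hd := hu.2 t k hkN
      have hc : HasDerivAt (fun s : ℝ => (starRingEnd ℂ) (u s k))
          ((starRingEnd ℂ) (-Complex.I * galerkinCubic N u t k)) t := hd.star
      have hmul := hc.mul hd
      have hre := Complex.reCLM.hasFDerivAt.comp_hasDerivAt t hmul
      have hcm := hre.const_mul (k : ℝ)
      have hfun : (fun s : ℝ => (k : ℝ) * ‖u s k‖ ^ 2)
          = fun s : ℝ => (k : ℝ) * Complex.reCLM ((starRingEnd ℂ) (u s k) * u s k) := by
        funext s
        rw [show ((starRingEnd ℂ) (u s k) * u s k) = ((Complex.normSq (u s k) : ℝ) : ℂ) by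
              rw [mul_comm]; exact Complex.mul_conj _]
        simp only [Complex.reCLM_apply, Complex.ofReal_re, Complex.normSq_eq_norm_sq]
      rw [hfun]
      refine hcm.congr_deriv ?_
      simp only [Complex.reCLM_apply]
      rw [show ((k : ℂ) * ((starRingEnd ℂ) (-Complex.I * galerkinCubic N u t k) * u t k
          + (starRingEnd ℂ) (u t k) * (-Complex.I * galerkinCubic N u t k)))
        = ((k : ℝ) : ℂ) * ((starRingEnd ℂ) (-Complex.I * galerkinCubic N u t k) * u t k
          + (starRingEnd ℂ) (u t k) * (-Complex.I * galerkinCubic N u t k)) by push_cast; ring]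
      rw [Complex.re_ofReal_mul]
    have hsum := HasDerivAt.fun_sum hterm
    have hzero : (∑ k ∈ Finset.range (N + 1),
        ((k : ℂ) * ((starRingEnd ℂ) (-Complex.I * galerkinCubic N u t k) * u t k
          + (starRingEnd ℂ) (u t k) * (-Complex.I * galerkinCubic N u t k))).re) = 0 := by
      rw [← Complex.re_sum]
      have : (∑ k ∈ Finset.range (N + 1),
          ((k : ℂ) * ((starRingEnd ℂ) (-Complex.I * galerkinCubic N u t k) * u t k
            + (starRingEnd ℂ) (u t k) * (-Complex.I * galerkinCubic N u t k))))
          = Complex.I * (starRingEnd ℂ)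
              (∑ k ∈ Finset.range (N + 1),
                (k : ℂ) * (starRingEnd ℂ) (u t k) * galerkinCubic N u t k)
            - Complex.I * ∑ k ∈ Finset.range (N + 1),
                (k : ℂ) * (starRingEnd ℂ) (u t k) * galerkinCubic N u t k := by
        rw [map_sum, Finset.mul_sum, Finset.mul_sum, ← Finset.sum_sub_distrib]
        refine Finset.sum_congr rfl fun k _ => ?_
        simp only [map_mul, map_natCast, Complex.conj_conj, map_neg, Complex.conj_I]
        ring
      rw [this, GalerkinAux.conj_S]
      simp
    rw [← hzero]
    exact hsum
  intro t
  have hdiff : Differentiable ℝ F := fun x => (key x).differentiableAt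
  have hderiv : ∀ x, deriv F x = 0 := fun x => (key x).deriv
  exact is_const_of_deriv_eq_zero hdiff hderiv t 0
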